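/- The function t ↦ t·φ(t), where φ(t) = 1 + t·ln(t/(1+t)), is nondecreasing on [1, ∞); consequently φ(t) ≥ (1 - ln 2)/t for all t ≥ 1. -/

import Mathlib

open Real

lemma half_hasDeriv (x : ℝ) (hx0 : x ≠ 0) :
    HasDerivAt (fun x : ℝ => (x - x⁻¹)/2 - Real.log x) ((1 - (-(x^2)⁻¹))/2 - x⁻¹) x :=
  (((hasDerivAt_id x).sub (hasDerivAt_inv hx0)).div_const 2).sub (Real.hasDerivAt_log hx0)

lemma log_le_half (u : ℝ) (hu : 1 ≤ u) : Real.log u ≤ (u - u⁻¹)/2 := by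
  have hmono : MonotoneOn (fun x : ℝ => (x - x⁻¹)/2 - Real.log x) (Set.Ici 1) := by
    apply monotoneOn_of_deriv_nonneg (convex_Ici 1)
    · apply ContinuousOn.sub
      · exact (continuousOn_id.sub (continuousOn_id.inv₀ (fun x hx => by
          simp at hx; positivity))).div_const 2
      · exact Real.continuousOn_log.mono (fun x hx => by simp at hx ⊢; linarith)
    · intro x hx
      rw [interior_Ici] at hx
      have hx0 : x ≠ 0 := by simp at hx; positivity
      exact (half_hasDeriv x hx0).differentiableAt.differentiableWithinAt
    · intro x hx
      rw [interior_Ici] at hx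
      simp only [Set.mem_Ioi] at hx
      have hx0 : x ≠ 0 := by positivity
      rw [(half_hasDeriv x hx0).deriv]
      have hx2 : (0:ℝ) < x^2 := by positivity
      have : (1 - -(x ^ 2)⁻¹) / 2 - x⁻¹ = (x-1)^2 / (2*x^2) := by
        field_simp; ring
      rw [this]; positivity
  have h := hmono Set.self_mem_Ici (Set.mem_Ici.mpr hu) hu
  simp only [Real.log_one] at h
  norm_num at h
  linarith

lemma main_hasDeriv (x : ℝ) (hx0 : 0 < x) :
    HasDerivAt (fun t : ℝ => t * (1 + t * Real.log (t / (1 + t))))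
      (1 * (1 + x * Real.log (x / (1+x))) +
       x * (1 * Real.log (x / (1+x)) + x * (x⁻¹ - (1+x)⁻¹))) x := by
  have hx1 : (0:ℝ) < 1 + x := by linarith
  apply HasDerivAt.mul (hasDerivAt_id x)
  apply HasDerivAt.const_add
  apply HasDerivAt.mul (hasDerivAt_id x)
  have hA : (fun t : ℝ => Real.log t - Real.log (1+t)) =ᶠ[nhds x]
      (fun t : ℝ => Real.log (t / (1+t))) := by
    filter_upwards [eventually_gt_nhds hx0] with t ht
    rw [Real.log_div (ne_of_gt ht) (by linarith)]
  have hlog2 : HasDerivAt (fun t : ℝ => Real.log (1+t)) ((1+x)⁻¹) x := by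
    have h := (Real.hasDerivAt_log hx1.ne').comp x ((hasDerivAt_id x).const_add 1)
    simpa [Function.comp_def] using h
  exact HasDerivAt.congr_of_eventuallyEq
    ((Real.hasDerivAt_log hx0.ne').sub hlog2) hA.symm

theorem t_phi_monotone_and_bound :
    MonotoneOn (fun t : ℝ => t * (1 + t * Real.log (t / (1 + t)))) (Set.Ici (1:ℝ)) ∧
    ∀ t : ℝ, 1 ≤ t → (1 - Real.log 2) / t ≤ 1 + t * Real.log (t / (1 + t)) := by
  have hmono : MonotoneOn (fun t : ℝ => t * (1 + t * Real.log (t / (1 + t)))) (Set.Ici (1:ℝ)) := by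
    apply monotoneOn_of_deriv_nonneg (convex_Ici 1)
    · apply ContinuousOn.mul continuousOn_id
      apply ContinuousOn.add continuousOn_const
      apply ContinuousOn.mul continuousOn_id
      apply ContinuousOn.log
      · exact continuousOn_id.div (continuousOn_const.add continuousOn_id)
          (fun x hx => by simp at hx ⊢; linarith)
      · intro x hx
        simp only [Set.mem_Ici] at hx
        have : (0:ℝ) < x / (1+x) := by positivity
        exact ne_of_gt this
    · intro x hx
      rw [interior_Ici] at hx
      simp only [Set.mem_Ioi] at hx
      exact (main_hasDeriv x (by linarith)).differentiableAt.differentiableWithinAt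
    · intro x hx
      rw [interior_Ici] at hx
      simp only [Set.mem_Ioi] at hx
      have hx0 : (0:ℝ) < x := by linarith
      have hx1 : (0:ℝ) < 1 + x := by linarith
      rw [(main_hasDeriv x hx0).deriv]
      have hlogeq : Real.log (x / (1+x)) = - Real.log ((1+x)/x) := by
        rw [← Real.log_inv]; congr 1; field_simp
      have hu : (1:ℝ) ≤ (1+x)/x := by rw [le_div_iff₀ hx0]; linarith
      have hkey := log_le_half ((1+x)/x) hu
      have hinv : ((1+x)/x)⁻¹ = x/(1+x) := by field_simp
      rw [hinv] at hkey
      have h2 : 2 * x * Real.log ((1+x)/x) ≤ x * ((1+x)/x - x/(1+x)) := by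
        have := mul_le_mul_of_nonneg_left hkey (le_of_lt hx0)
        nlinarith
      rw [hlogeq]
      have heq : x * ((1+x)/x - x/(1+x)) = (2*x+1)/(1+x) := by field_simp; ring
      rw [heq] at h2
      have hxx : x * (x * (x⁻¹ - (1+x)⁻¹)) = x/(1+x) := by field_simp; ring
      have hfin : 1 + x/(1+x) = (2*x+1)/(1+x) := by field_simp; ring
      nlinarith [h2, hxx, hfin]
  refine ⟨hmono, fun t ht => ?_⟩
  have ht0 : (0:ℝ) < t := by linarith
  have := hmono Set.self_mem_Ici (Set.mem_Ici.mpr ht) ht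
  simp only at this
  have h1 : Real.log ((1:ℝ) / (1+1)) = - Real.log 2 := by
    rw [show ((1:ℝ)/(1+1)) = 2⁻¹ by norm_num, Real.log_inv]
  rw [div_le_iff₀ ht0]
  calc (1 - Real.log 2) = 1 * (1 + 1 * Real.log (1 / (1+1))) := by rw [h1]; ring
    _ ≤ t * (1 + t * Real.log (t / (1+t))) := this
    _ = (1 + t * Real.log (t / (1+t))) * t := by ring
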